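/- For every class H ⊆ [p]^n and every coordinate i ∈ [n], the shifting operator in direction i does not increase the size of projections: for every sequence S of coordinates, |S_i(H)|_S| ≤ |H|_S|. -/

import Mathlib

open Finset

/-- The edge of the one-inclusion graph of `H ⊆ [p]^n` in direction `i` through `g`:
all members of `H` agreeing with `g` off coordinate `i`. -/
def edgeF {n p : ℕ} (H : Finset (Fin n → Fin p)) (i : Fin n) (g : Fin n → Fin p) :
    Finset (Fin n → Fin p) :=
  H.filter (fun h => ∀ j, j ≠ i → h j = g j)

/-- The shifting operator in direction `i`: each edge is pushed downward, i.e. replaced by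
the words agreeing with its pattern off `i` whose `i`-th coordinate is among the
`|e|` smallest values. -/
def shift {n p : ℕ} (i : Fin n) (H : Finset (Fin n → Fin p)) : Finset (Fin n → Fin p) :=
  Finset.univ.filter (fun g => (g i).val < (edgeF H i g).card)

/-- The projection of `H` to a sequence `S` of coordinates. -/
def projF {n p k : ℕ} (H : Finset (Fin n → Fin p)) (S : Fin k → Fin n) :
    Finset (Fin k → Fin p) :=
  H.image (fun h => fun j => h (S j))

/-- `H` E-shatters size `k` if some sequence of `k` coordinates has projection of size `≥ 2^k`. -/
def EShatters {n p : ℕ} (H : Finset (Fin n → Fin p)) (k : ℕ) : Prop :=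
  ∃ S : Fin k → Fin n, 2 ^ k ≤ (projF H S).card

/-- The exponential dimension: the largest `k` that `H` E-shatters. -/
noncomputable def dE {n p : ℕ} (H : Finset (Fin n → Fin p)) : ℕ :=
  sSup {k | EShatters H k}

/-- The number of edges of the one-inclusion graph of `H` in direction `j`
(equivalently, the number of distinct patterns of `H` off coordinate `j`). -/
def numEdges {n p : ℕ} (H : Finset (Fin n → Fin p)) (j : Fin n) : ℕ :=
  (H.image (fun h => fun k : {k : Fin n // k ≠ j} => h k.1)).card

/-- `avd'(H) = (1/|H|) Σ_{e ∈ E} (|e| − 1)`, over all edges including singletons. -/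
def avd' {n p : ℕ} (H : Finset (Fin n → Fin p)) : ℚ :=
  (∑ j : Fin n, ((H.card : ℚ) - (numEdges H j : ℚ))) / (H.card : ℚ)

/-- The degree of `v`: the number of non-singleton edges of the one-inclusion graph
containing `v`. -/
def deg {n p : ℕ} (H : Finset (Fin n → Fin p)) (v : Fin n → Fin p) : ℕ :=
  (Finset.univ.filter (fun j : Fin n => 2 ≤ (edgeF H j v).card)).card

/-- The average degree of the one-inclusion graph of `H`. -/
def avd {n p : ℕ} (H : Finset (Fin n → Fin p)) : ℚ :=
  (∑ v ∈ H, (deg H v : ℚ)) / (H.card : ℚ)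

/-- Shifting in direction `i` does not increase the size of any projection. -/
theorem shift_proj_card_le {n p k : ℕ} (H : Finset (Fin n → Fin p)) (i : Fin n)
    (S : Fin k → Fin n) :
    (projF (shift i H) S).card ≤ (projF H S).card := by
  classical
  set ρ : (Fin k → Fin p) → (Fin k → Option (Fin p)) :=
    fun q j => if S j = i then none else some (q j) with hρ
  have key : ∀ f : Fin k → Option (Fin p),
      ((projF (shift i H) S).filter (fun q => ρ q = f)).card
        ≤ ((projF H S).filter (fun q => ρ q = f)).card := by
    intro f
    by_cases hi : ∃ j0, S j0 = i
    · obtain ⟨j0, hj0⟩ := hi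
      by_cases hne : ((projF (shift i H) S).filter (fun q => ρ q = f)).Nonempty
      · obtain ⟨q₀, hq₀⟩ := hne
        rw [Finset.mem_filter] at hq₀
        obtain ⟨hq₀m, hq₀f⟩ := hq₀
        obtain ⟨g₁, hg₁, hg₁e⟩ := Finset.mem_image.mp hq₀m
        rw [shift, Finset.mem_filter] at hg₁
        -- compat set
        set C : Finset (Fin n → Fin p) :=
          Finset.univ.filter (fun g => ∀ j, S j ≠ i → (some (g (S j)) : Option (Fin p)) = f j)
          with hC
        have hg₁C : g₁ ∈ C := by
          rw [hC, Finset.mem_filter]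
          refine ⟨Finset.mem_univ _, fun j hj => ?_⟩
          have : ρ q₀ j = f j := by rw [hq₀f]
          rw [hρ] at this
          simp only [if_neg hj] at this
          rw [← this, ← hg₁e]
        set M : ℕ := C.sup (fun g => (edgeF H i g).card) with hM
        obtain ⟨g₀, hg₀C, hg₀M⟩ := Finset.exists_mem_eq_sup C ⟨g₁, hg₁C⟩
          (fun g => (edgeF H i g).card)
        -- step 1 : shift fiber ≤ M
        have step1 : ((projF (shift i H) S).filter (fun q => ρ q = f)).card
            ≤ (Finset.univ.filter (fun v : Fin p => v.val < M)).card := by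
          apply Finset.card_le_card_of_injOn (fun q => q j0)
          · intro q hq
            rw [Finset.mem_coe, Finset.mem_filter] at hq
            obtain ⟨hqm, hqf⟩ := hq
            obtain ⟨g, hg, hge⟩ := Finset.mem_image.mp hqm
            rw [shift, Finset.mem_filter] at hg
            have hgC : g ∈ C := by
              rw [hC, Finset.mem_filter]
              refine ⟨Finset.mem_univ _, fun j hj => ?_⟩
              have : ρ q j = f j := by rw [hqf]
              rw [hρ] at this
              simp only [if_neg hj] at this
              rw [← this, ← hge]
            have : q j0 = g i := by rw [← hge]; simp [hj0]
            simp only [Finset.mem_coe, Finset.mem_filter]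
            refine ⟨Finset.mem_univ _, ?_⟩
            rw [this]
            exact lt_of_lt_of_le hg.2 (le_trans
              (Finset.le_sup (f := fun g => (edgeF H i g).card) hgC) (le_of_eq hM.symm))
          · intro q hq q' hq' hqq'
            rw [Finset.mem_coe, Finset.mem_filter] at hq hq'
            obtain ⟨hqm, hqf⟩ := hq
            obtain ⟨hq'm, hq'f⟩ := hq'
            obtain ⟨g, hg, hge⟩ := Finset.mem_image.mp hqm
            obtain ⟨g', hg', hg'e⟩ := Finset.mem_image.mp hq'm
            funext j
            by_cases hSj : S j = i
            · have h1 : q j = q j0 := by rw [← hge]; simp [hSj, hj0]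
              have h2 : q' j = q' j0 := by rw [← hg'e]; simp [hSj, hj0]
              rw [h1, h2]; exact hqq'
            · have e1 : ρ q j = f j := by rw [hqf]
              have e2 : ρ q' j = f j := by rw [hq'f]
              rw [hρ] at e1 e2
              simp only [if_neg hSj] at e1 e2
              have := e1.trans e2.symm
              exact Option.some_injective _ this
        have step1' : (Finset.univ.filter (fun v : Fin p => v.val < M)).card ≤ M := by
          calc (Finset.univ.filter (fun v : Fin p => v.val < M)).card
              ≤ (Finset.range M).card := by
                apply Finset.card_le_card_of_injOn (fun v : Fin p => v.val)
                · intro v hv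
                  rw [Finset.mem_coe, Finset.mem_filter] at hv
                  exact Finset.mem_range.mpr hv.2
                · intro a _ b _ h
                  exact Fin.val_injective h
            _ = M := Finset.card_range M
        -- step 2 : M ≤ H fiber
        have step2 : M ≤ ((projF H S).filter (fun q => ρ q = f)).card := by
          rw [hM, hg₀M]
          apply Finset.card_le_card_of_injOn (fun h => fun j => h (S j))
          · intro h hh
            simp only [Finset.mem_coe, edgeF, Finset.mem_filter] at hh
            rw [Finset.mem_coe, Finset.mem_filter]
            constructor
            · exact Finset.mem_image.mpr ⟨h, hh.1, rfl⟩
            · funext j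
              rw [hρ]
              by_cases hSj : S j = i
              · simp only [if_pos hSj]
                have : ρ q₀ j = f j := by rw [hq₀f]
                rw [hρ] at this
                simp only [if_pos hSj] at this
                exact this
              · simp only [if_neg hSj]
                rw [hh.2 (S j) hSj]
                rw [hC, Finset.mem_filter] at hg₀C
                exact hg₀C.2 j hSj
          · intro a ha b hb hab
            simp only [Finset.mem_coe, edgeF, Finset.mem_filter] at ha hb
            funext j
            by_cases hji : j = i
            · subst hji
              have := congrFun hab j0
              simpa [hj0] using this
            · rw [ha.2 j hji, hb.2 j hji]
        exact le_trans (le_trans step1 step1') step2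
      · rw [Finset.not_nonempty_iff_eq_empty] at hne
        simp [hne]
    · push_neg at hi
      apply Finset.card_le_card
      intro q hq
      rw [Finset.mem_filter] at hq ⊢
      refine ⟨?_, hq.2⟩
      obtain ⟨g, hg, hge⟩ := Finset.mem_image.mp hq.1
      rw [shift, Finset.mem_filter] at hg
      have hpos : 0 < (edgeF H i g).card := lt_of_le_of_lt (Nat.zero_le _) hg.2
      obtain ⟨h, hh⟩ := Finset.card_pos.mp hpos
      rw [edgeF, Finset.mem_filter] at hh
      refine Finset.mem_image.mpr ⟨h, hh.1, ?_⟩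
      rw [← hge]
      funext j
      exact hh.2 (S j) (hi j)
  calc (projF (shift i H) S).card
      = ∑ f ∈ (Finset.univ : Finset (Fin k → Option (Fin p))),
          ((projF (shift i H) S).filter (fun q => ρ q = f)).card :=
        Finset.card_eq_sum_card_fiberwise (fun q _ => Finset.mem_univ (ρ q))
    _ ≤ ∑ f ∈ (Finset.univ : Finset (Fin k → Option (Fin p))),
          ((projF H S).filter (fun q => ρ q = f)).card :=
        Finset.sum_le_sum (fun f _ => key f)
    _ = (projF H S).card :=
        (Finset.card_eq_sum_card_fiberwise (fun q _ => Finset.mem_univ (ρ q))).symm
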